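/- Let n be a positive integer, let A be a transitive subgroup of the symmetric group Sₙ acting on n points, and let e be a positive integer with n/2 < e < n and gcd(e, n) = 1. If A contains an e-cycle and also contains a transposition, then A = Sₙ. -/
import Mathlib

open Equiv Finset

private lemma aux_dvd_card {α : Type*} [DecidableEq α] (cls : α → Finset α) (m : ℕ)
    (hcard : ∀ x, (cls x).card = m) (hmem : ∀ x, x ∈ cls x)
    (heq : ∀ x y, y ∈ cls x → cls x = cls y) :
    ∀ S : Finset α, (∀ x ∈ S, cls x ⊆ S) → m ∣ S.card := by
  intro S
  induction S using Finset.strongInduction with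
  | _ S ih =>
    intro hS
    rcases S.eq_empty_or_nonempty with rfl | ⟨x, hx⟩
    · simp
    · have hsub : cls x ⊆ S := hS x hx
      have hdisj : ∀ y ∈ S \ cls x, cls y ⊆ S \ cls x := by
        intro y hy
        rw [Finset.mem_sdiff] at hy
        intro z hz
        rw [Finset.mem_sdiff]
        refine ⟨hS y hy.1 hz, fun hzx => ?_⟩
        have h1 : cls x = cls z := heq x z hzx
        have h2 : cls y = cls z := heq y z hz
        exact hy.2 ((h1.trans h2.symm) ▸ hmem y)
      have hlt : S \ cls x ⊂ S :=
        Finset.sdiff_ssubset hsub ⟨x, hmem x⟩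
      have hdvd := ih _ hlt hdisj
      have hcardeq : S.card = (S \ cls x).card + m := by
        rw [Finset.card_sdiff_of_subset hsub, hcard, Nat.sub_add_cancel]
        rw [← hcard x]; exact Finset.card_le_card hsub
      rw [hcardeq]
      exact Nat.dvd_add hdvd dvd_rfl

/-- A transitive subgroup `A ≤ Sₙ` containing an `e`-cycle, where `n/2 < e < n` and
`gcd(e,n) = 1`, and a transposition is the full symmetric group. -/
theorem eq_top_of_contains_cycle_and_swap
    (n : ℕ) (hn : 0 < n) (A : Subgroup (Equiv.Perm (Fin n)))
    (hA : MulAction.IsPretransitive A (Fin n))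
    (e : ℕ) (he₁ : n < 2 * e) (he₂ : e < n) (hcop : Nat.Coprime e n)
    (σ : Equiv.Perm (Fin n)) (hσA : σ ∈ A)
    (hcyc : σ.IsCycle) (hsupp : σ.support.card = e)
    (τ : Equiv.Perm (Fin n)) (hτA : τ ∈ A) (hτ : τ.IsSwap) :
    A = ⊤ := by
  classical
  have hsymm : ∀ {x y : Fin n}, Equiv.swap x y ∈ A → Equiv.swap y x ∈ A := by
    intro x y h; rwa [Equiv.swap_comm]
  have htrans : ∀ {x y z : Fin n}, Equiv.swap x y ∈ A → Equiv.swap y z ∈ A →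
      Equiv.swap x z ∈ A := fun h1 h2 => SubmonoidClass.swap_mem_trans A h1 h2
  have hconj : ∀ g ∈ A, ∀ x y : Fin n, Equiv.swap x y ∈ A →
      Equiv.swap (g x) (g y) ∈ A := by
    intro g hg x y h
    rw [Equiv.swap_apply_apply]
    exact A.mul_mem (A.mul_mem hg h) (A.inv_mem hg)
  -- classes
  set cls : Fin n → Finset (Fin n) :=
    fun x => Finset.univ.filter (fun y => Equiv.swap x y ∈ A) with hcls
  have hmemcls : ∀ x y : Fin n, y ∈ cls x ↔ Equiv.swap x y ∈ A := by
    intro x y; simp [hcls]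
  have hmemself : ∀ x, x ∈ cls x := fun x =>
    (hmemcls x x).2 (by rw [Equiv.swap_self]; exact A.one_mem)
  have heqcls : ∀ x y, y ∈ cls x → cls x = cls y := by
    intro x y hy
    have hxy := (hmemcls x y).1 hy
    ext z
    rw [hmemcls, hmemcls]
    exact ⟨fun h => htrans (hsymm hxy) h, fun h => htrans hxy h⟩
  have himg : ∀ g ∈ A, ∀ x : Fin n, cls (g x) = (cls x).image g := by
    intro g hg x
    ext z
    simp only [Finset.mem_image, hmemcls]
    constructor
    · intro h
      refine ⟨g⁻¹ z, ?_, by simp⟩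
      have := hconj g⁻¹ (A.inv_mem hg) (g x) z h
      simpa using this
    · rintro ⟨w, hw, rfl⟩
      exact hconj g hg x w hw
  have hcardcls : ∀ x y : Fin n, (cls x).card = (cls y).card := by
    intro x y
    obtain ⟨g, hg⟩ := hA.exists_smul_eq x y
    have heqq : cls y = (cls x).image (g : Equiv.Perm (Fin n)) := by
      rw [← hg]; exact himg g g.2 x
    rw [heqq, Finset.card_image_of_injective _ (g : Equiv.Perm (Fin n)).injective]
  obtain ⟨a, b, hab, rfl⟩ := hτ
  set m := (cls a).card with hm
  have hcardclsm : ∀ x, (cls x).card = m := fun x => hcardcls x a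
  have hm2 : 2 ≤ m := by
    rw [hm]
    have hb : b ∈ cls a := (hmemcls a b).2 hτA
    have ha : a ∈ cls a := hmemself a
    calc 2 = ({a, b} : Finset (Fin n)).card := by
          rw [Finset.card_insert_of_notMem (by simpa using hab), Finset.card_singleton]
    _ ≤ (cls a).card := Finset.card_le_card
          (by intro z hz; simp at hz; rcases hz with rfl | rfl <;> assumption)
  have hmdvdn : m ∣ n := by
    have := aux_dvd_card cls m hcardclsm hmemself heqcls Finset.univ
      (fun x _ => Finset.subset_univ _)
    simpa using this
  by_cases hcase : ∃ x ∈ σ.support, ∃ y ∉ σ.support, Equiv.swap x y ∈ A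
  · obtain ⟨x, hx, y, hy, hxy⟩ := hcase
    have hσy : σ y = y := Equiv.Perm.notMem_support.1 hy
    have hsuppsub : σ.support ⊆ cls y := by
      intro z hz
      have hsc : σ.SameCycle x z :=
        hcyc.sameCycle (Equiv.Perm.mem_support.1 hx) (Equiv.Perm.mem_support.1 hz)
      obtain ⟨i, hi⟩ := hsc
      have hσiA : (σ ^ i : Equiv.Perm (Fin n)) ∈ A := A.zpow_mem hσA i
      have hrz : Equiv.swap ((σ ^ i) x) ((σ ^ i) y) ∈ A := hconj _ hσiA x y hxy
      rw [hi, Equiv.Perm.zpow_apply_eq_self_of_apply_eq_self hσy i] at hrz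
      exact (hmemcls y z).2 (hsymm hrz)
    have hcardge : e + 1 ≤ m := by
      rw [← hcardclsm y]
      have hins : insert y σ.support ⊆ cls y := by
        intro z hz
        rcases Finset.mem_insert.1 hz with h | hz
        · rw [h]; exact hmemself y
        · exact hsuppsub hz
      calc e + 1 = (insert y σ.support).card := by
            rw [Finset.card_insert_of_notMem hy, hsupp]
      _ ≤ (cls y).card := Finset.card_le_card hins
    have hmn : m = n := by
      rcases (Nat.le_of_dvd hn hmdvdn).lt_or_eq with hlt | heqq
      · exfalso
        obtain ⟨k, hk⟩ := hmdvdn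
        have hk2 : 2 ≤ k := by
          rcases k with _ | _ | k <;> omega
        have : 2 * m ≤ n := by rw [hk]; nlinarith
        omega
      · exact heqq
    rw [eq_top_iff, ← Equiv.Perm.closure_isSwap, Subgroup.closure_le]
    rintro f ⟨u, v, huv, rfl⟩
    have huniv : cls u = Finset.univ := Finset.eq_univ_of_card _
      (by rw [hcardclsm u, hmn, Fintype.card_fin])
    exact (hmemcls u v).1 (huniv ▸ Finset.mem_univ v)
  · exfalso
    push_neg at hcase
    have hsub : ∀ x ∈ σ.support, cls x ⊆ σ.support := by
      intro x hx z hz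
      by_contra hzs
      exact hcase x hx z hzs ((hmemcls x z).1 hz)
    have hmdvde : m ∣ e := by
      have := aux_dvd_card cls m hcardclsm hmemself heqcls σ.support hsub
      rwa [hsupp] at this
    have h1 : m ∣ Nat.gcd e n := Nat.dvd_gcd hmdvde hmdvdn
    rw [hcop] at h1
    have := Nat.le_of_dvd one_pos h1
    omega
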